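/- Let f : ℝ → ℝ be the sinc function, f(t) = sin(πt)/(πt) for t ≠ 0 and f(0) = 1, and for n ∈ ℤ^d let φ̂_n(x) = ∏_{j=1}^d f(n_j + x_j). Then for every multiindex α ∈ ℕ^d there exists a constant C = C(α,d) > 0 such that ∑_{n ∈ ℤ^d} ∫_{B_R} |∂^α φ̂_n(x)|² dx ≤ C R^{2d} for every R ≥ 1. -/

import Mathlib

open scoped BigOperators

/-- The sinc function: `f(t) = sin(πt)/(πt)` for `t ≠ 0` and `f(0) = 1`. -/
noncomputable def sinc (t : ℝ) : ℝ :=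
  if t = 0 then 1 else Real.sin (Real.pi * t) / (Real.pi * t)

/-- `φ̂_n(x) = ∏_{j=1}^d f(n_j + x_j)` where `f` is the sinc function. -/
noncomputable def phihat {d : ℕ} (n : Fin d → ℤ) (x : Fin d → ℝ) : ℝ :=
  ∏ j, sinc ((n j : ℝ) + x j)

/-- Partial derivative in the `j`-th coordinate direction. -/
noncomputable def coordDeriv {d : ℕ} {E : Type*} [NormedAddCommGroup E] [NormedSpace ℝ E]
    (j : Fin d) (g : (Fin d → ℝ) → E) : (Fin d → ℝ) → E :=
  fun x => fderiv ℝ g x (Pi.single j 1)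

/-- The multiindex partial derivative `∂^α = ∂^{α_1}_{x_1} ⋯ ∂^{α_d}_{x_d}`. -/
noncomputable def multiDeriv {d : ℕ} {E : Type*} [NormedAddCommGroup E] [NormedSpace ℝ E]
    (α : Fin d → ℕ) (g : (Fin d → ℝ) → E) : (Fin d → ℝ) → E :=
  (List.finRange d).foldr (fun j h => (coordDeriv j)^[α j] h) g

open MeasureTheory

open Real intervalIntegral

set_option maxHeartbeats 1000000

noncomputable def Sk (k : ℕ) (t : ℝ) : ℝ :=
  ∫ u in (0:ℝ)..1, u ^ k * Real.cos (Real.pi * (t * u) + k * (Real.pi / 2))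

lemma Sk_zero : Sk 0 = _root_.sinc := by
  funext t
  simp only [Sk, _root_.sinc, pow_zero, one_mul, Nat.cast_zero, zero_mul, add_zero]
  by_cases ht : t = 0
  · simp [ht]
  · rw [if_neg ht]
    have hπt : Real.pi * t ≠ 0 := mul_ne_zero Real.pi_ne_zero ht
    have : ∀ u : ℝ, Real.cos (Real.pi * (t * u)) = Real.cos (u * (Real.pi * t)) := by
      intro u; ring_nf
    simp_rw [this]
    rw [intervalIntegral.integral_comp_mul_right (fun x => Real.cos x) hπt]
    simp [integral_cos, smul_eq_mul]
    ring

lemma Sk_hasDerivAt (k : ℕ) (t : ℝ) :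
    HasDerivAt (Sk k) (Real.pi * Sk (k + 1) t) t := by
  have key := intervalIntegral.hasDerivAt_integral_of_dominated_loc_of_deriv_le
    (F := fun x u => u ^ k * Real.cos (Real.pi * (x * u) + k * (Real.pi / 2)))
    (F' := fun x u => Real.pi * (u ^ (k+1) * Real.cos (Real.pi * (x * u) + (k+1) * (Real.pi / 2))))
    (x₀ := t) (a := 0) (b := 1) (μ := volume) (bound := fun _ => Real.pi)
    (s := Metric.ball t 1) (Metric.ball_mem_nhds t one_pos)
    (by
      filter_upwards with x
      exact (Continuous.aestronglyMeasurable ((continuous_pow k).mul (by fun_prop))).restrict)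
    (by
      apply Continuous.intervalIntegrable
      exact (continuous_pow k).mul (by fun_prop))
    (by
      exact (Continuous.aestronglyMeasurable (continuous_const.mul
        ((continuous_pow (k+1)).mul (by fun_prop)))).restrict)
    (by
      filter_upwards with u hu x _
      have hu' : u ∈ Set.Ioc (0:ℝ) 1 := by rwa [Set.uIoc_of_le (by norm_num : (0:ℝ) ≤ 1)] at hu
      have h1 : |u ^ (k+1)| ≤ 1 := by
        rw [abs_pow]
        exact pow_le_one₀ (abs_nonneg u) (abs_le.2 ⟨by linarith [hu'.1], hu'.2⟩)
      have h2 : |Real.cos (Real.pi * (x * u) + (k+1) * (Real.pi / 2))| ≤ 1 := Real.abs_cos_le_one _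
      calc ‖Real.pi * (u ^ (k+1) * Real.cos (Real.pi * (x * u) + (k+1) * (Real.pi / 2)))‖
          = Real.pi * (|u ^ (k+1)| * |Real.cos (Real.pi * (x * u) + (k+1) * (Real.pi / 2))|) := by
            rw [Real.norm_eq_abs, abs_mul, abs_mul, abs_of_nonneg Real.pi_pos.le]
        _ ≤ Real.pi * (1 * 1) := by
            apply mul_le_mul_of_nonneg_left _ Real.pi_pos.le
            exact mul_le_mul h1 h2 (abs_nonneg _) one_pos.le
        _ = Real.pi := by ring)
    (by apply Continuous.intervalIntegrable; exact continuous_const)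
    (by
      filter_upwards with u _ x _
      have h : HasDerivAt (fun x : ℝ => Real.pi * (x * u) + k * (Real.pi / 2))
          (Real.pi * u) x := by
        simpa using (((hasDerivAt_id x).mul_const u).const_mul Real.pi).add_const (k * (Real.pi / 2))
      have := ((Real.hasDerivAt_cos _).comp x h).const_mul ((u:ℝ) ^ k)
      refine this.congr_deriv ?_
      have hcos : Real.cos (Real.pi * (x * u) + (k+1) * (Real.pi / 2))
          = -Real.sin (Real.pi * (x * u) + k * (Real.pi / 2)) := by
        have h' : Real.pi * (x * u) + ((k:ℝ)+1) * (Real.pi / 2)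
            = (Real.pi * (x * u) + k * (Real.pi / 2)) + Real.pi / 2 := by ring
        rw [h', Real.cos_add_pi_div_two]
      rw [hcos]
      ring)
  have h3 : Real.pi * Sk (k+1) t = ∫ u in (0:ℝ)..1,
      Real.pi * (u ^ (k+1) * Real.cos (Real.pi * (t * u) + ((k:ℝ)+1) * (Real.pi / 2))) := by
    rw [Sk, ← intervalIntegral.integral_const_mul]
    norm_num
  rw [h3]
  exact key.2

lemma Sk_abs_le_one (k : ℕ) (t : ℝ) : |Sk k t| ≤ 1 := by
  have := intervalIntegral.norm_integral_le_of_norm_le_const (C := 1)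
    (f := fun u : ℝ => u ^ k * Real.cos (Real.pi * (t * u) + k * (Real.pi / 2)))
    (a := 0) (b := 1) ?bnd
  · simpa [Sk] using this
  · intro u hu
    have hu' : u ∈ Set.Ioc (0:ℝ) 1 := by rwa [Set.uIoc_of_le (by norm_num : (0:ℝ) ≤ 1)] at hu
    have h1 : |u ^ k| ≤ 1 := by
      rw [abs_pow]; exact pow_le_one₀ (abs_nonneg u) (abs_le.2 ⟨by linarith [hu'.1], hu'.2⟩)
    calc ‖u ^ k * Real.cos (Real.pi * (t * u) + k * (Real.pi / 2))‖
        = |u ^ k| * |Real.cos (Real.pi * (t * u) + k * (Real.pi / 2))| := by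
          rw [Real.norm_eq_abs, abs_mul]
      _ ≤ 1 * 1 := mul_le_mul h1 (Real.abs_cos_le_one _) (abs_nonneg _) one_pos.le
      _ = 1 := by ring

lemma Sk_decay (k : ℕ) {t : ℝ} (ht : t ≠ 0) : |Sk k t| ≤ 2 / (Real.pi * |t|) := by
  have hπt : Real.pi * t ≠ 0 := mul_ne_zero Real.pi_ne_zero ht
  set c : ℝ := (k : ℝ) * (Real.pi / 2) with hc
  set G : ℝ → ℝ := fun u => u ^ k * (Real.sin (Real.pi * (t * u) + c) / (Real.pi * t)) with hG
  have hG' : ∀ u : ℝ, HasDerivAt G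
      ((k : ℝ) * u ^ (k - 1) * (Real.sin (Real.pi * (t * u) + c) / (Real.pi * t))
        + u ^ k * Real.cos (Real.pi * (t * u) + c)) u := by
    intro u
    have harg : HasDerivAt (fun u : ℝ => Real.pi * (t * u) + c) (Real.pi * t) u := by
      simpa [mul_assoc] using (((hasDerivAt_id u).const_mul t).const_mul Real.pi).add_const c
    have hsin : HasDerivAt (fun u : ℝ => Real.sin (Real.pi * (t * u) + c) / (Real.pi * t))
        (Real.cos (Real.pi * (t * u) + c)) u := by
      have := ((Real.hasDerivAt_sin _).comp u harg).div_const (Real.pi * t)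
      simpa [mul_div_assoc, mul_div_cancel_right₀ _ hπt] using this
    have := (hasDerivAt_pow k u).mul hsin
    refine this.congr_deriv ?_
    ring
  have hIBP : (∫ u in (0:ℝ)..1,
      ((k : ℝ) * u ^ (k - 1) * (Real.sin (Real.pi * (t * u) + c) / (Real.pi * t))
        + u ^ k * Real.cos (Real.pi * (t * u) + c))) = G 1 - G 0 := by
    apply intervalIntegral.integral_eq_sub_of_hasDerivAt (fun u _ => hG' u)
    apply Continuous.intervalIntegrable
    fun_prop
  have hsplit : (∫ u in (0:ℝ)..1,
      ((k : ℝ) * u ^ (k - 1) * (Real.sin (Real.pi * (t * u) + c) / (Real.pi * t))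
        + u ^ k * Real.cos (Real.pi * (t * u) + c)))
      = (∫ u in (0:ℝ)..1, (k : ℝ) * u ^ (k - 1) * (Real.sin (Real.pi * (t * u) + c) / (Real.pi * t)))
        + Sk k t := by
    rw [Sk, ← intervalIntegral.integral_add]
    · apply Continuous.intervalIntegrable; fun_prop
    · apply Continuous.intervalIntegrable; fun_prop
  have hSk : Sk k t = (G 1 - G 0)
      - ∫ u in (0:ℝ)..1, (k : ℝ) * u ^ (k - 1) * (Real.sin (Real.pi * (t * u) + c) / (Real.pi * t)) := by
    rw [← hIBP, hsplit]; ring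
  have hG0 : G 0 = 0 := by
    rcases Nat.eq_zero_or_pos k with hk | hk
    · simp [hG, hk, hc]
    · simp [hG, zero_pow (Nat.pos_iff_ne_zero.mp hk)]
  have hpt : 0 < Real.pi * |t| := mul_pos Real.pi_pos (abs_pos.2 ht)
  have hG1 : |G 1| ≤ 1 / (Real.pi * |t|) := by
    have h : |G 1| = |Real.sin (Real.pi * (t * 1) + c)| / (Real.pi * |t|) := by
      rw [hG]; simp [abs_div, abs_mul, abs_of_nonneg Real.pi_pos.le]
    rw [h]
    gcongr
    exact Real.abs_sin_le_one _
  have hcorr : |∫ u in (0:ℝ)..1,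
      (k : ℝ) * u ^ (k - 1) * (Real.sin (Real.pi * (t * u) + c) / (Real.pi * t))|
      ≤ 1 / (Real.pi * |t|) := by
    rcases Nat.eq_zero_or_pos k with hk | hk
    · simp [hk]
      positivity
    · have habs : |∫ u in (0:ℝ)..1,
          (k : ℝ) * u ^ (k - 1) * (Real.sin (Real.pi * (t * u) + c) / (Real.pi * t))|
          ≤ ∫ u in (0:ℝ)..1,
            |(k : ℝ) * u ^ (k - 1) * (Real.sin (Real.pi * (t * u) + c) / (Real.pi * t))| := by
        exact intervalIntegral.abs_integral_le_integral_abs (by norm_num)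
      have hmono : (∫ u in (0:ℝ)..1,
            |(k : ℝ) * u ^ (k - 1) * (Real.sin (Real.pi * (t * u) + c) / (Real.pi * t))|)
          ≤ ∫ u in (0:ℝ)..1, (k : ℝ) * u ^ (k - 1) * (1 / (Real.pi * |t|)) := by
        apply intervalIntegral.integral_mono_on (by norm_num : (0:ℝ) ≤ 1)
        · apply Continuous.intervalIntegrable; fun_prop
        · apply Continuous.intervalIntegrable; fun_prop
        · intro u hu
          have hu0 : (0:ℝ) ≤ u := hu.1
          have hu1 : u ≤ 1 := hu.2
          have h1 : |u ^ (k-1)| ≤ 1 := by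
            rw [abs_pow]; exact pow_le_one₀ (abs_nonneg u) (abs_le.2 ⟨by linarith, hu1⟩)
          have h2 : |Real.sin (Real.pi * (t * u) + c) / (Real.pi * t)| ≤ 1 / (Real.pi * |t|) := by
            rw [abs_div, abs_mul, abs_of_nonneg Real.pi_pos.le]
            gcongr
            exact Real.abs_sin_le_one _
          calc |(k : ℝ) * u ^ (k - 1) * (Real.sin (Real.pi * (t * u) + c) / (Real.pi * t))|
              = (k : ℝ) * u ^ (k-1) * |Real.sin (Real.pi * (t * u) + c) / (Real.pi * t)| := by
                rw [abs_mul, abs_mul, Nat.abs_cast, abs_of_nonneg (pow_nonneg hu0 _)]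
            _ ≤ (k : ℝ) * u ^ (k-1) * (1 / (Real.pi * |t|)) :=
                mul_le_mul_of_nonneg_left h2 (by positivity)
      have hval : (∫ u in (0:ℝ)..1, (k : ℝ) * u ^ (k - 1) * (1 / (Real.pi * |t|)))
          = 1 / (Real.pi * |t|) := by
        have : (∫ u in (0:ℝ)..1, (k : ℝ) * u ^ (k - 1) * (1 / (Real.pi * |t|)))
            = ((k : ℝ) * (1 / (Real.pi * |t|))) * ∫ u in (0:ℝ)..1, u ^ (k - 1) := by
          rw [← intervalIntegral.integral_const_mul]
          congr 1; funext u; ring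
        rw [this, integral_pow]
        have hk' : (k - 1 + 1 : ℕ) = k := Nat.succ_pred_eq_of_pos hk
        rw [hk']
        have hkne : (k:ℝ) ≠ 0 := Nat.cast_ne_zero.2 (Nat.pos_iff_ne_zero.mp hk)
        field_simp
        rw [zero_pow (Nat.pos_iff_ne_zero.mp hk), Nat.cast_sub (Nat.one_le_iff_ne_zero.mpr (Nat.pos_iff_ne_zero.mp hk))]
        push_cast
        ring
      calc |∫ u in (0:ℝ)..1,
          (k : ℝ) * u ^ (k - 1) * (Real.sin (Real.pi * (t * u) + c) / (Real.pi * t))|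
          ≤ _ := habs
        _ ≤ _ := hmono
        _ = 1 / (Real.pi * |t|) := hval
  have habs2 : |Sk k t| ≤ |G 1| + |∫ u in (0:ℝ)..1,
      (k : ℝ) * u ^ (k - 1) * (Real.sin (Real.pi * (t * u) + c) / (Real.pi * t))| := by
    rw [hSk, hG0, sub_zero]
    exact abs_sub _ _
  have h2 : (2:ℝ) / (Real.pi * |t|) = 1 / (Real.pi * |t|) + 1 / (Real.pi * |t|) := by ring
  rw [h2]
  linarith

lemma Sk_continuous (k : ℕ) : Continuous (Sk k) :=
  continuous_iff_continuousAt.2 fun t => (Sk_hasDerivAt k t).continuousAt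

noncomputable def qf (k : ℕ) (t : ℝ) : ℝ := (Real.pi ^ k * Sk k t) ^ 2

lemma qf_nonneg (k : ℕ) (t : ℝ) : 0 ≤ qf k t := sq_nonneg _

lemma qf_continuous (k : ℕ) : Continuous (qf k) := by
  exact (continuous_const.mul (Sk_continuous k)).pow 2

lemma qf_le (k : ℕ) (t : ℝ) : qf k t ≤ (Real.pi ^ k) ^ 2 := by
  rw [qf]
  have h : |Real.pi ^ k * Sk k t| ≤ Real.pi ^ k := by
    rw [abs_mul, abs_of_nonneg (by positivity : (0:ℝ) ≤ Real.pi ^ k)]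
    calc Real.pi ^ k * |Sk k t| ≤ Real.pi ^ k * 1 :=
      mul_le_mul_of_nonneg_left (Sk_abs_le_one k t) (by positivity)
    _ = Real.pi ^ k := mul_one _
  calc (Real.pi ^ k * Sk k t) ^ 2 = |Real.pi ^ k * Sk k t| ^ 2 := (sq_abs _).symm
    _ ≤ (Real.pi ^ k) ^ 2 := by
        apply pow_le_pow_left₀ (abs_nonneg _) h

lemma qf_decay (k : ℕ) {t : ℝ} (ht : 1 ≤ |t|) :
    qf k t ≤ 4 * (Real.pi ^ k) ^ 2 / t ^ 2 := by
  have ht0 : t ≠ 0 := by intro h; rw [h] at ht; simp at ht; linarith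
  have h : |Real.pi ^ k * Sk k t| ≤ 2 * Real.pi ^ k / |t| := by
    rw [abs_mul, abs_of_nonneg (by positivity : (0:ℝ) ≤ Real.pi ^ k)]
    calc Real.pi ^ k * |Sk k t| ≤ Real.pi ^ k * (2 / (Real.pi * |t|)) :=
      mul_le_mul_of_nonneg_left (Sk_decay k ht0) (by positivity)
    _ = 2 * Real.pi ^ k / (Real.pi * |t|) := by ring
    _ ≤ 2 * Real.pi ^ k / (1 * |t|) := by
        apply div_le_div_of_nonneg_left (by positivity) (by positivity)
        apply mul_le_mul_of_nonneg_right _ (abs_nonneg t)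
        linarith [Real.pi_gt_three]
    _ = 2 * Real.pi ^ k / |t| := by rw [one_mul]
  calc qf k t = |Real.pi ^ k * Sk k t| ^ 2 := (sq_abs _).symm
    _ ≤ (2 * Real.pi ^ k / |t|) ^ 2 := pow_le_pow_left₀ (abs_nonneg _) h 2
    _ = 4 * (Real.pi ^ k) ^ 2 / t ^ 2 := by
        rw [div_pow, sq_abs]
        ring_nf

lemma coordDeriv_prod {d : ℕ} (f f' : Fin d → ℝ → ℝ)
    (hf : ∀ i t, HasDerivAt (f i) (f' i t) t) (j : Fin d) :
    coordDeriv j (fun x => ∏ i, f i (x i))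
      = fun x => ∏ i, Function.update f j (f' j) i (x i) := by
  funext x
  have hgi : ∀ i ∈ Finset.univ, HasFDerivAt (fun x : Fin d → ℝ => f i (x i))
      ((f' i (x i)) • (ContinuousLinearMap.proj i : (Fin d → ℝ) →L[ℝ] ℝ)) x := by
    intro i _
    have hproj : HasFDerivAt (fun x : Fin d → ℝ => x i)
        (ContinuousLinearMap.proj i : (Fin d → ℝ) →L[ℝ] ℝ) x :=
      hasFDerivAt_apply i x
    exact (hf i (x i)).comp_hasFDerivAt x hproj
  have H := HasFDerivAt.finset_prod hgi
  rw [coordDeriv]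
  rw [H.fderiv]
  rw [ContinuousLinearMap.sum_apply]
  have hterm : ∀ i : Fin d,
      ((∏ l ∈ Finset.univ.erase i, f l (x l)) •
        ((f' i (x i)) • (ContinuousLinearMap.proj i : (Fin d → ℝ) →L[ℝ] ℝ))) (Pi.single j 1)
      = if i = j then (∏ l ∈ Finset.univ.erase i, f l (x l)) * f' i (x i) else 0 := by
    intro i
    rcases eq_or_ne i j with h | h
    · subst h
      simp [ContinuousLinearMap.proj_apply, smul_eq_mul]
    · simp [ContinuousLinearMap.proj_apply, smul_eq_mul, h,
        Pi.single_eq_of_ne h]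
  rw [Finset.sum_congr rfl (fun i _ => hterm i), Finset.sum_ite_eq' Finset.univ j _]
  simp only [Finset.mem_univ, if_true]
  rw [← Finset.mul_prod_erase Finset.univ _ (Finset.mem_univ j)]
  rw [Function.update_self]
  rw [Finset.prod_congr rfl (fun i hi =>
    congrFun (Function.update_of_ne (Finset.ne_of_mem_erase hi) (f' j) f) (x i))]
  ring

noncomputable def Phi {d : ℕ} (m : Fin d → ℕ) (n : Fin d → ℤ) : (Fin d → ℝ) → ℝ :=
  fun x => ∏ j, Real.pi ^ (m j) * Sk (m j) ((n j : ℝ) + x j)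

lemma shift_hasDerivAt (k : ℕ) (c t : ℝ) :
    HasDerivAt (fun t => Real.pi ^ k * Sk k (c + t))
      (Real.pi ^ (k+1) * Sk (k+1) (c + t)) t := by
  have h1 : HasDerivAt (fun t : ℝ => c + t) 1 t := (hasDerivAt_id t).const_add c
  have := ((Sk_hasDerivAt k (c + t)).comp t h1).const_mul (Real.pi ^ k)
  refine this.congr_deriv ?_
  rw [pow_succ]
  ring

lemma coordDeriv_Phi {d : ℕ} (m : Fin d → ℕ) (n : Fin d → ℤ) (j : Fin d) :
    coordDeriv j (Phi m n) = Phi (Function.update m j (m j + 1)) n := by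
  have h := coordDeriv_prod
    (fun i => fun t => Real.pi ^ (m i) * Sk (m i) ((n i : ℝ) + t))
    (fun i => fun t => Real.pi ^ (m i + 1) * Sk (m i + 1) ((n i : ℝ) + t))
    (fun i t => shift_hasDerivAt (m i) ((n i : ℝ)) t) j
  have e1 : Phi m n = fun x => ∏ i, (fun t => Real.pi ^ (m i) * Sk (m i) ((n i : ℝ) + t)) (x i) := rfl
  rw [e1, h]
  funext x
  simp only [Phi]
  apply Finset.prod_congr rfl
  intro i _
  rcases eq_or_ne i j with rfl | hij
  · simp [Function.update_self]
  · simp [Function.update_of_ne hij]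

lemma coordDeriv_iter_Phi {d : ℕ} (m : Fin d → ℕ) (n : Fin d → ℤ) (j : Fin d) (a : ℕ) :
    (coordDeriv j)^[a] (Phi m n) = Phi (Function.update m j (m j + a)) n := by
  induction a with
  | zero => simp
  | succ a ih =>
      rw [Function.iterate_succ_apply', ih, coordDeriv_Phi]
      rw [Function.update_self, Function.update_idem, Nat.add_assoc]

lemma foldr_Phi {d : ℕ} (α : Fin d → ℕ) (n : Fin d → ℤ) :
    ∀ (l : List (Fin d)), l.Nodup → ∀ (m : Fin d → ℕ),
      List.foldr (fun j h => (coordDeriv j)^[α j] h) (Phi m n) l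
        = Phi (fun j => if j ∈ l then m j + α j else m j) n := by
  intro l
  induction l with
  | nil =>
      intro _ m
      simp only [List.foldr_nil, List.not_mem_nil, if_false]
  | cons j l ih =>
      intro hnd m
      have hj : j ∉ l := (List.nodup_cons.1 hnd).1
      rw [List.foldr_cons, ih (List.nodup_cons.1 hnd).2 m, coordDeriv_iter_Phi]
      have hupd : Function.update (fun i => if i ∈ l then m i + α i else m i) j
          ((fun i => if i ∈ l then m i + α i else m i) j + α j)
          = fun i => if i ∈ j :: l then m i + α i else m i := by
        funext i
        rcases eq_or_ne i j with rfl | hij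
        · simp [Function.update_self, hj, List.mem_cons]
        · simp [Function.update_of_ne hij, List.mem_cons, hij]
      rw [hupd]

lemma multiDeriv_phihat {d : ℕ} (α : Fin d → ℕ) (n : Fin d → ℤ) :
    multiDeriv α (phihat n) = Phi α n := by
  have h0 : phihat n = Phi (fun _ => 0) n := by
    funext x
    rw [phihat, Phi]
    apply Finset.prod_congr rfl
    intro i _
    rw [pow_zero, one_mul, Sk_zero]
  rw [multiDeriv, h0, foldr_Phi α n (List.finRange d) (List.nodup_finRange d)]
  congr 1
  funext i
  simp [List.mem_finRange]

noncomputable def Wc : ℝ := ∑' n : ℤ, 1 / (n : ℝ) ^ 2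

lemma Wc_summable : Summable (fun n : ℤ => 1 / (n : ℝ) ^ 2) := by
  have := Real.summable_one_div_int_pow (p := 2)
  exact this.2 one_lt_two

lemma Wc_nonneg : 0 ≤ Wc := tsum_nonneg (fun n => by positivity)

/-- one-dimensional bound -/
lemma one_dim_bound (k : ℕ) {R : ℝ} (hR : 1 ≤ R) :
    Summable (fun m : ℤ => ∫ t in Set.Icc (-R) R, qf k ((m : ℝ) + t)) ∧
    (∑' m : ℤ, ∫ t in Set.Icc (-R) R, qf k ((m : ℝ) + t))
      ≤ ((Real.pi ^ k) ^ 2 * (14 + 16 * Wc)) * R ^ 2 := by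
  set E : ℝ := (Real.pi ^ k) ^ 2 with hE
  have hE0 : 0 < E := by positivity
  set N : ℤ := ⌈R⌉ + 1 with hN
  have hNR : (N : ℝ) ≥ R + 1 := by
    rw [hN]; push_cast; linarith [Int.le_ceil R]
  have hNle : (N : ℝ) ≤ R + 2 := by
    rw [hN]; push_cast; linarith [Int.ceil_lt_add_one R]
  set c : ℤ → ℝ := fun m => ∫ t in Set.Icc (-R) R, qf k ((m : ℝ) + t) with hc
  have hint : ∀ m : ℤ, IntegrableOn (fun t => qf k ((m : ℝ) + t)) (Set.Icc (-R) R) := by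
    intro m
    exact (((qf_continuous k).comp (continuous_const.add continuous_id)).continuousOn).integrableOn_compact
      isCompact_Icc
  have hc0 : ∀ m, 0 ≤ c m := fun m => integral_nonneg (fun t => qf_nonneg _ _)
  have hvol : (volume (Set.Icc (-R) R)).toReal = 2 * R := by
    rw [Real.volume_Icc]
    rw [ENNReal.toReal_ofReal (by linarith)]
    ring
  -- bound 1
  have hb1 : ∀ m : ℤ, c m ≤ E * (2 * R) := by
    intro m
    calc c m ≤ ∫ _ in Set.Icc (-R) R, E := by
          apply setIntegral_mono_on (hint m) (integrableOn_const (by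
            rw [Real.volume_Icc]; exact ENNReal.ofReal_ne_top)) measurableSet_Icc
          intro t _
          exact qf_le k _
      _ = E * (2 * R) := by rw [setIntegral_const, measureReal_def, hvol, smul_eq_mul, mul_comm]
  -- bound 2
  have hb2 : ∀ m : ℤ, N ≤ |m| → c m ≤ 2 * R * (4 * E) * (1 / ((|m| - N + 1 : ℤ) : ℝ) ^ 2) := by
    intro m hm
    have hden : (1:ℝ) ≤ ((|m| - N + 1 : ℤ) : ℝ) := by
      push_cast
      have : (N:ℝ) ≤ (|m| : ℝ) := by exact_mod_cast hm
      linarith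
    have hptw : ∀ t ∈ Set.Icc (-R) R,
        qf k ((m : ℝ) + t) ≤ 4 * E / ((|m| - N + 1 : ℤ) : ℝ) ^ 2 := by
      intro t ht
      have habs : ((|m| - N + 1 : ℤ) : ℝ) ≤ |(m : ℝ) + t| := by
        have h1 : |(m:ℝ)| - |t| ≤ |(m:ℝ) + t| := by
          have := abs_sub_abs_le_abs_sub (m:ℝ) (-t)
          simpa [sub_neg_eq_add] using this
        have h2 : |t| ≤ R := abs_le.2 ⟨ht.1, ht.2⟩
        have h3 : ((|m|:ℤ):ℝ) = |(m:ℝ)| := by push_cast; rfl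
        push_cast
        rw [← h3]
        push_cast
        linarith [hNR]
      have h1le : (1:ℝ) ≤ |(m:ℝ) + t| := le_trans hden habs
      calc qf k ((m : ℝ) + t) ≤ 4 * E / ((m:ℝ) + t) ^ 2 := qf_decay k h1le
        _ ≤ 4 * E / ((|m| - N + 1 : ℤ) : ℝ) ^ 2 := by
            apply div_le_div_of_nonneg_left (by positivity) (by positivity)
            calc ((|m| - N + 1 : ℤ) : ℝ) ^ 2 ≤ |(m:ℝ) + t| ^ 2 :=
                pow_le_pow_left₀ (by linarith) habs 2
              _ = ((m:ℝ) + t) ^ 2 := sq_abs _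
    calc c m ≤ ∫ _ in Set.Icc (-R) R, 4 * E / ((|m| - N + 1 : ℤ) : ℝ) ^ 2 := by
          apply setIntegral_mono_on (hint m) (integrableOn_const (by
            rw [Real.volume_Icc]; exact ENNReal.ofReal_ne_top)) measurableSet_Icc hptw
      _ = 2 * R * (4 * E) * (1 / ((|m| - N + 1 : ℤ) : ℝ) ^ 2) := by
          rw [setIntegral_const, measureReal_def, hvol, smul_eq_mul]
          ring
  -- majorants
  set h1 : ℤ → ℝ := fun m => if |m| < N then E * (2 * R) else 0 with hh1
  set w : ℤ → ℝ := fun m => 1 / ((|m| - N + 1 : ℤ) : ℝ) ^ 2 with hw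
  set h2 : ℤ → ℝ := fun m => 2 * R * (4 * E) * w m with hh2
  have hw0 : ∀ m, 0 ≤ w m := fun m => by rw [hw]; positivity
  have hcle : ∀ m, c m ≤ h1 m + h2 m := by
    intro m
    rcases lt_or_ge |m| N with hm | hm
    · have : h1 m = E * (2 * R) := if_pos hm
      rw [this]
      have h2nn : 0 ≤ h2 m := by
        rw [hh2]
        have := hw0 m
        positivity
      linarith [hb1 m]
    · have : h1 m = 0 := if_neg (not_lt.2 hm)
      rw [this, zero_add]
      have := hb2 m hm
      rw [hh2]
      calc c m ≤ 2 * R * (4 * E) * (1 / ((|m| - N + 1 : ℤ) : ℝ) ^ 2) := hb2 m hm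
        _ = 2 * R * (4 * E) * w m := by rw [hw]
  -- h1 : finite support
  have hN0 : 0 < N := by
    have : (0:ℝ) < (N:ℝ) := by linarith
    exact_mod_cast this
  have h1sup : ∀ m ∉ Finset.Icc (-N) N, h1 m = 0 := by
    intro m hm
    rw [Finset.mem_Icc] at hm
    apply if_neg
    rw [not_lt]
    rcases abs_cases m with ⟨h, _⟩ | ⟨h, _⟩ <;> omega
  have h1summ : Summable h1 := summable_of_ne_finset_zero h1sup
  have h1tsum : ∑' m, h1 m ≤ 14 * E * R ^ 2 := by
    rw [tsum_eq_sum h1sup]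
    have hcard : (Finset.Icc (-N) N).card = (2 * N + 1).toNat := by
      rw [Int.card_Icc]
      congr 1
      ring
    have hcardR : ((Finset.Icc (-N) N).card : ℝ) ≤ 7 * R := by
      rw [hcard]
      have h2N : ((2 * N + 1).toNat : ℝ) = 2 * (N:ℝ) + 1 := by
        have h := Int.toNat_of_nonneg (show (0:ℤ) ≤ 2*N+1 by omega)
        exact_mod_cast congrArg (Int.cast : ℤ → ℝ) h
      rw [h2N]
      linarith
    calc (∑ m ∈ Finset.Icc (-N) N, h1 m)
        ≤ ∑ _m ∈ Finset.Icc (-N) N, E * (2 * R) := by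
          apply Finset.sum_le_sum
          intro m _
          by_cases hmm : |m| < N
          · rw [show h1 m = E * (2 * R) from if_pos hmm]
          · rw [show h1 m = 0 from if_neg hmm]
            positivity
      _ = ((Finset.Icc (-N) N).card : ℝ) * (E * (2 * R)) := by
          rw [Finset.sum_const, nsmul_eq_mul]
      _ ≤ 7 * R * (E * (2 * R)) := by
          apply mul_le_mul_of_nonneg_right hcardR (by positivity)
      _ = 14 * E * R ^ 2 := by ring
  -- w summable
  set v : ℤ → ℝ := fun m => 1 / ((m - (N - 1) : ℤ) : ℝ) ^ 2 + 1 / ((m + (N - 1) : ℤ) : ℝ) ^ 2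
    with hv
  have hv1 : Summable (fun m : ℤ => 1 / ((m - (N - 1) : ℤ) : ℝ) ^ 2) := by
    have := (Equiv.subRight (N - 1)).summable_iff
      (f := fun n : ℤ => 1 / (n : ℝ) ^ 2)
    exact this.2 Wc_summable
  have hv2 : Summable (fun m : ℤ => 1 / ((m + (N - 1) : ℤ) : ℝ) ^ 2) := by
    have := (Equiv.addRight (N - 1)).summable_iff
      (f := fun n : ℤ => 1 / (n : ℝ) ^ 2)
    exact this.2 Wc_summable
  have hvsumm : Summable v := hv1.add hv2
  have hwv : ∀ m, w m ≤ v m := by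
    intro m
    rcases le_or_gt 0 m with hm | hm
    · have he : (|m| - N + 1 : ℤ) = m - (N - 1) := by rw [abs_of_nonneg hm]; ring
      simp only [hw, hv]
      rw [he]
      have : (0:ℝ) ≤ 1 / ((m + (N - 1) : ℤ) : ℝ) ^ 2 := by positivity
      linarith
    · have he : ((|m| - N + 1 : ℤ) : ℝ) ^ 2 = ((m + (N - 1) : ℤ) : ℝ) ^ 2 := by
        have : (|m| - N + 1 : ℤ) = -(m + (N - 1)) := by rw [abs_of_neg hm]; ring
        rw [this]
        push_cast
        ring
      simp only [hw, hv]
      rw [he]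
      have : (0:ℝ) ≤ 1 / ((m - (N - 1) : ℤ) : ℝ) ^ 2 := by positivity
      linarith
  have hwsumm : Summable w := Summable.of_nonneg_of_le hw0 hwv hvsumm
  have hwtsum : ∑' m, w m ≤ 2 * Wc := by
    have hvtsum : ∑' m, v m = 2 * Wc := by
      rw [hv, Summable.tsum_add hv1 hv2]
      have e1 : ∑' m : ℤ, 1 / ((m - (N - 1) : ℤ) : ℝ) ^ 2 = Wc := by
        rw [Wc]
        exact ((Equiv.subRight (N - 1)).tsum_eq (fun n : ℤ => 1 / (n : ℝ) ^ 2))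
      have e2 : ∑' m : ℤ, 1 / ((m + (N - 1) : ℤ) : ℝ) ^ 2 = Wc := by
        rw [Wc]
        exact ((Equiv.addRight (N - 1)).tsum_eq (fun n : ℤ => 1 / (n : ℝ) ^ 2))
      rw [e1, e2]; ring
    calc ∑' m, w m ≤ ∑' m, v m := Summable.tsum_le_tsum hwv hwsumm hvsumm
      _ = 2 * Wc := hvtsum
  have h2summ : Summable h2 := by
    rw [hh2]
    exact hwsumm.mul_left _
  have h2tsum : ∑' m, h2 m ≤ 16 * E * Wc * R ^ 2 := by
    rw [hh2, tsum_mul_left]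
    calc 2 * R * (4 * E) * ∑' m, w m ≤ 2 * R * (4 * E) * (2 * Wc) := by
          apply mul_le_mul_of_nonneg_left hwtsum (by positivity)
      _ = 16 * E * Wc * R := by ring
      _ ≤ 16 * E * Wc * R ^ 2 := by
          apply mul_le_mul_of_nonneg_left _ (mul_nonneg (by positivity) Wc_nonneg)
          nlinarith
  have hsummc : Summable c :=
    Summable.of_nonneg_of_le hc0 hcle (h1summ.add h2summ)
  refine ⟨hsummc, ?_⟩
  calc ∑' m, c m ≤ ∑' m, (h1 m + h2 m) := Summable.tsum_le_tsum hcle hsummc (h1summ.add h2summ)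
    _ = ∑' m, h1 m + ∑' m, h2 m := Summable.tsum_add h1summ h2summ
    _ ≤ 14 * E * R ^ 2 + 16 * E * Wc * R ^ 2 := add_le_add h1tsum h2tsum
    _ = (E * (14 + 16 * Wc)) * R ^ 2 := by ring

lemma tsum_pi_prod : ∀ {d : ℕ} (c : Fin d → ℤ → ℝ), (∀ j m, 0 ≤ c j m) →
    (∀ j, Summable (c j)) →
    Summable (fun n : Fin d → ℤ => ∏ j, c j (n j)) ∧
      (∑' n : Fin d → ℤ, ∏ j, c j (n j)) = ∏ j, ∑' m, c j m := by
  intro d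
  induction d with
  | zero =>
      intro c _ _
      constructor
      · haveI : Finite (Fin 0 → ℤ) := Finite.of_subsingleton
        exact Summable.of_finite
      · rw [Finset.univ_eq_empty, tsum_eq_single (fun i => Fin.elim0 i.elim0)]
        · simp
        · intro b hb
          exact absurd (Subsingleton.elim b _) hb
  | succ d ih =>
      intro c h0 hs
      have IH := ih (fun j => c j.succ) (fun j m => h0 j.succ m) (fun j => hs j.succ)
      set g : (Fin d → ℤ) → ℝ := fun n' => ∏ j, c j.succ (n' j) with hg
      set e : ℤ × (Fin d → ℤ) ≃ (Fin (d+1) → ℤ) := Fin.consEquiv (fun _ => ℤ) with he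
      have hcomp : ∀ p : ℤ × (Fin d → ℤ),
          (∏ j, c j ((e p) j)) = c 0 p.1 * g p.2 := by
        intro p
        rw [Fin.prod_univ_succ]
        simp [he, Fin.consEquiv, hg]
      have hsum2 : Summable (fun p : ℤ × (Fin d → ℤ) => c 0 p.1 * g p.2) :=
        Summable.mul_of_nonneg (hs 0) IH.1 (fun m => h0 0 m)
          (fun n' => Finset.prod_nonneg (fun j _ => h0 j.succ (n' j)))
      have hsumf : Summable (fun n : Fin (d+1) → ℤ => ∏ j, c j (n j)) := by
        rw [← e.summable_iff]
        exact hsum2.congr (fun p => (hcomp p).symm)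
      refine ⟨hsumf, ?_⟩
      have h1 : (∑' n : Fin (d+1) → ℤ, ∏ j, c j (n j))
          = ∑' p : ℤ × (Fin d → ℤ), c 0 p.1 * g p.2 := by
        rw [← e.tsum_eq (fun n => ∏ j, c j (n j))]
        exact tsum_congr hcomp
      rw [h1, Summable.tsum_prod' hsum2 (fun m => (IH.1.mul_left (c 0 m)))]
      simp_rw [tsum_mul_left]
      rw [tsum_mul_right, IH.2, Fin.prod_univ_succ]


lemma multiDeriv_sq {d : ℕ} (α : Fin d → ℕ) (n : Fin d → ℤ) (x : Fin d → ℝ) :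
    (multiDeriv α (phihat n) x) ^ 2 = ∏ j, qf (α j) ((n j : ℝ) + x j) := by
  rw [multiDeriv_phihat]
  rw [show Phi α n x = ∏ j, Real.pi ^ (α j) * Sk (α j) ((n j : ℝ) + x j) from rfl]
  rw [← Finset.prod_pow]
  rfl

/-- For every multiindex `α ∈ ℕ^d` there is a constant `C = C(α,d) > 0` such
that `∑_{n ∈ ℤ^d} ∫_{B_R} |∂^α φ̂_n(x)|² dx ≤ C R^{2d}` for every `R ≥ 1`, where `B_R` is the
open Euclidean ball of radius `R` centered at the origin in `ℝ^d`. -/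
theorem stmt5 (d : ℕ) (α : Fin d → ℕ) :
    ∃ C > 0, ∀ R : ℝ, 1 ≤ R →
      Summable (fun n : Fin d → ℤ =>
        ∫ x in {x : Fin d → ℝ | ∑ j, x j ^ 2 < R ^ 2}, (multiDeriv α (phihat n) x) ^ 2) ∧
      (∑' n : Fin d → ℤ,
          ∫ x in {x : Fin d → ℝ | ∑ j, x j ^ 2 < R ^ 2}, (multiDeriv α (phihat n) x) ^ 2) ≤
        C * R ^ (2 * d) := by
  set K : Fin d → ℝ := fun j => (Real.pi ^ (α j)) ^ 2 * (14 + 16 * Wc) with hK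
  have hK0 : ∀ j, 0 < K j := by
    intro j
    have := Wc_nonneg
    show 0 < (Real.pi ^ (α j)) ^ 2 * (14 + 16 * Wc)
    have h1 : (0:ℝ) < (Real.pi ^ (α j)) ^ 2 := by positivity
    nlinarith
  refine ⟨∏ j, K j, Finset.prod_pos (fun j _ => hK0 j), ?_⟩
  intro R hR
  set B : Set (Fin d → ℝ) := {x : Fin d → ℝ | ∑ j, x j ^ 2 < R ^ 2} with hB
  set Q : Set (Fin d → ℝ) := Set.pi Set.univ (fun _ => Set.Icc (-R) R) with hQ
  set c : Fin d → ℤ → ℝ := fun j m => ∫ t in Set.Icc (-R) R, qf (α j) ((m : ℝ) + t) with hc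
  have hc0 : ∀ j m, 0 ≤ c j m := fun j m => integral_nonneg (fun t => qf_nonneg _ _)
  have h1d : ∀ j : Fin d, Summable (c j) ∧ (∑' m, c j m) ≤ K j * R ^ 2 :=
    fun j => one_dim_bound (α j) hR
  -- continuity of the integrand
  have hcont : ∀ n : Fin d → ℤ, Continuous (fun x : Fin d → ℝ =>
      ∏ j, qf (α j) ((n j : ℝ) + x j)) := by
    intro n
    apply continuous_finset_prod
    intro j _
    exact (qf_continuous (α j)).comp (continuous_const.add (continuous_apply j))
  have hBQ : B ⊆ Q := by
    intro x hx
    rw [hQ, Set.mem_univ_pi]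
    intro j
    have hxj : x j ^ 2 ≤ ∑ i, x i ^ 2 :=
      Finset.single_le_sum (fun i _ => sq_nonneg (x i)) (Finset.mem_univ j)
    have hxR : x j ^ 2 < R ^ 2 := lt_of_le_of_lt hxj hx
    constructor
    · nlinarith
    · nlinarith
  have hQmeas : MeasurableSet Q := MeasurableSet.univ_pi (fun _ => measurableSet_Icc)
  have hQint : ∀ n : Fin d → ℤ,
      IntegrableOn (fun x : Fin d → ℝ => ∏ j, qf (α j) ((n j : ℝ) + x j)) Q := by
    intro n
    exact (hcont n).continuousOn.integrableOn_compact
      (isCompact_univ_pi (fun _ => isCompact_Icc))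
  -- Fubini on the cube
  have hQeq : ∀ n : Fin d → ℤ,
      (∫ x in Q, ∏ j, qf (α j) ((n j : ℝ) + x j)) = ∏ j, c j (n j) := by
    intro n
    rw [← MeasureTheory.integral_indicator hQmeas]
    have hind : Set.indicator Q (fun x : Fin d → ℝ => ∏ j, qf (α j) ((n j : ℝ) + x j))
        = fun x => ∏ j, Set.indicator (Set.Icc (-R) R)
            (fun t => qf (α j) ((n j : ℝ) + t)) (x j) := by
      funext x
      by_cases hx : x ∈ Q
      · rw [Set.indicator_of_mem hx]
        rw [hQ, Set.mem_univ_pi] at hx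
        exact Finset.prod_congr rfl (fun j _ =>
          (Set.indicator_of_mem (hx j) (fun t => qf (α j) ((n j : ℝ) + t))).symm)
      · rw [Set.indicator_of_notMem hx]
        rw [hQ, Set.mem_univ_pi] at hx
        push_neg at hx
        obtain ⟨j, hj⟩ := hx
        exact (Finset.prod_eq_zero (Finset.mem_univ j)
          (Set.indicator_of_notMem hj _)).symm
    rw [hind, MeasureTheory.integral_fintype_prod_volume_eq_prod (ι := Fin d)
      (fun j t => Set.indicator (Set.Icc (-R) R) (fun u => qf (α j) ((n j : ℝ) + u)) t)]
    exact Finset.prod_congr rfl (fun j _ => MeasureTheory.integral_indicator measurableSet_Icc)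
  -- the pointwise bound on each term
  have hterm : ∀ n : Fin d → ℤ,
      (∫ x in B, (multiDeriv α (phihat n) x) ^ 2) ≤ ∏ j, c j (n j) := by
    intro n
    have he : (∫ x in B, (multiDeriv α (phihat n) x) ^ 2)
        = ∫ x in B, ∏ j, qf (α j) ((n j : ℝ) + x j) := by
      apply MeasureTheory.integral_congr_ae
      filter_upwards with x
      exact multiDeriv_sq α n x
    rw [he]
    calc (∫ x in B, ∏ j, qf (α j) ((n j : ℝ) + x j))
        ≤ ∫ x in Q, ∏ j, qf (α j) ((n j : ℝ) + x j) := by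
          apply setIntegral_mono_set (hQint n)
          · filter_upwards with x
            exact Finset.prod_nonneg (fun j _ => qf_nonneg _ _)
          · exact Filter.Eventually.of_forall hBQ
      _ = ∏ j, c j (n j) := hQeq n
  have hterm0 : ∀ n : Fin d → ℤ, 0 ≤ ∫ x in B, (multiDeriv α (phihat n) x) ^ 2 :=
    fun n => integral_nonneg (fun x => sq_nonneg _)
  have hpi := tsum_pi_prod c hc0 (fun j => (h1d j).1)
  have hsum : Summable (fun n : Fin d → ℤ =>
      ∫ x in B, (multiDeriv α (phihat n) x) ^ 2) :=
    Summable.of_nonneg_of_le hterm0 hterm hpi.1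
  refine ⟨hsum, ?_⟩
  calc (∑' n : Fin d → ℤ, ∫ x in B, (multiDeriv α (phihat n) x) ^ 2)
      ≤ ∑' n : Fin d → ℤ, ∏ j, c j (n j) := Summable.tsum_le_tsum hterm hsum hpi.1
    _ = ∏ j, ∑' m, c j m := hpi.2
    _ ≤ ∏ j, K j * R ^ 2 := by
        apply Finset.prod_le_prod
        · intro j _
          exact tsum_nonneg (fun m => hc0 j m)
        · intro j _
          exact (h1d j).2
    _ = (∏ j, K j) * R ^ (2 * d) := by
        rw [Finset.prod_mul_distrib, Finset.prod_const, Finset.card_univ, Fintype.card_fin]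
        rw [← pow_mul]
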